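/- For any real numbers r₁, r₂ with 1/√2 < r₁ < r₂, the sum of 1/|n|² over lattice points n ∈ ℤ² with r₁ ≤ |n| ≤ r₂ is at most 2π(ln(r₂ + 1/√2) - ln(r₁ - 1/√2)). -/

import Mathlib

open Real MeasureTheory Set

noncomputable section AnnulusAux

/-- The function `1/|x|²` on `ℝ × ℝ`. -/
def f2 (x : ℝ × ℝ) : ℝ := 1 / (x.1 ^ 2 + x.2 ^ 2)

def Sq : Set (ℝ × ℝ) := Ioo (-(1/2):ℝ) (1/2) ×ˢ Ioo (-(1/2):ℝ) (1/2)

lemma measSq : MeasurableSet Sq := (measurableSet_Ioo.prod measurableSet_Ioo)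

lemma volSq : volume Sq = 1 := by
  rw [Sq, Measure.volume_eq_prod, Measure.prod_prod, Real.volume_Ioo]
  norm_num

lemma int_neg (g : ℝ × ℝ → ℝ) : ∫ v in Sq, g (-v) = ∫ v in Sq, g v := by
  have h := (Measure.measurePreserving_neg (volume : Measure (ℝ × ℝ))).setIntegral_preimage_emb
    (MeasurableEquiv.neg (ℝ × ℝ)).measurableEmbedding g Sq
  have e : (Neg.neg : ℝ×ℝ → ℝ×ℝ) ⁻¹' Sq = Sq := by
    ext ⟨x, y⟩
    simp only [Sq, mem_preimage, Prod.neg_mk, mem_prod, mem_Ioo]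
    constructor <;> rintro ⟨⟨h1,h2⟩,h3,h4⟩ <;>
      exact ⟨⟨by linarith, by linarith⟩, by linarith, by linarith⟩
  rwa [e] at h

def rotEquiv : (ℝ × ℝ) ≃ᵐ (ℝ × ℝ) :=
  MeasurableEquiv.prodComm.trans ((MeasurableEquiv.neg ℝ).prodCongr (MeasurableEquiv.refl ℝ))

lemma int_rot (g : ℝ × ℝ → ℝ) : ∫ v in Sq, g (-v.2, v.1) = ∫ v in Sq, g v := by
  have hmp : MeasurePreserving (fun v : ℝ × ℝ => ((-v.2, v.1) : ℝ × ℝ))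
      (volume : Measure (ℝ × ℝ)) (volume : Measure (ℝ × ℝ)) := by
    have h1 : MeasurePreserving (Prod.swap : ℝ × ℝ → ℝ × ℝ)
        ((volume : Measure ℝ).prod volume) ((volume : Measure ℝ).prod volume) :=
      Measure.measurePreserving_swap
    have h2 : MeasurePreserving (Prod.map (Neg.neg : ℝ → ℝ) (id : ℝ → ℝ))
        ((volume : Measure ℝ).prod volume) ((volume : Measure ℝ).prod volume) :=
      (Measure.measurePreserving_neg volume).prod (MeasurePreserving.id volume)
    exact h2.comp h1
  have hemb : MeasurableEmbedding (fun v : ℝ × ℝ => ((-v.2, v.1) : ℝ × ℝ)) := by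
    have he : (fun v : ℝ × ℝ => ((-v.2, v.1) : ℝ × ℝ)) = ⇑rotEquiv := by
      ext ⟨x, y⟩ <;> rfl
    rw [he]; exact rotEquiv.measurableEmbedding
  have h := hmp.setIntegral_preimage_emb hemb g Sq
  have e : (fun v : ℝ × ℝ => ((-v.2, v.1) : ℝ × ℝ)) ⁻¹' Sq = Sq := by
    ext ⟨x, y⟩
    simp only [Sq, mem_preimage, mem_prod, mem_Ioo]
    constructor <;> rintro ⟨⟨h1,h2⟩,h3,h4⟩ <;>
      exact ⟨⟨by linarith, by linarith⟩, by linarith, by linarith⟩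
  rwa [e] at h

lemma int_trans (c : ℝ × ℝ) (g : ℝ × ℝ → ℝ) (Q : Set (ℝ × ℝ)) :
    ∫ v in (fun v => c + v) ⁻¹' Q, g (c + v) = ∫ x in Q, g x :=
  (measurePreserving_add_left (volume : Measure (ℝ × ℝ)) c).setIntegral_preimage_emb
    (MeasurableEquiv.addLeft c).measurableEmbedding g Q

lemma core4 (N V p q : ℝ) (hN : 1 ≤ N) (hV : 0 ≤ V) (hV2 : V ≤ 1/2)
    (hpq : p^2 + q^2 = N * V) :
    4 / N ≤ 1/(N+V+2*p) + 1/(N+V-2*p) + 1/(N+V+2*q) + 1/(N+V-2*q) := by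
  have hVN : V < N := by linarith
  have hd1 : 0 < (N+V)^2 - 4*p^2 := by nlinarith [sq_nonneg (N - V), sq_nonneg q]
  have hd2 : 0 < (N+V)^2 - 4*q^2 := by nlinarith [sq_nonneg (N - V), sq_nonneg p]
  have hS : 0 < N + V := by linarith
  have h1 : 0 < N+V+2*p := by nlinarith
  have h2 : 0 < N+V-2*p := by nlinarith
  have h3 : 0 < N+V+2*q := by nlinarith
  have h4 : 0 < N+V-2*q := by nlinarith
  have e1 : 1/(N+V+2*p) + 1/(N+V-2*p) = 2*(N+V)/((N+V)^2 - 4*p^2) := by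
    rw [div_add_div _ _ h1.ne' h2.ne', div_eq_div_iff (mul_pos h1 h2).ne' hd1.ne']; ring
  have e2 : 1/(N+V+2*q) + 1/(N+V-2*q) = 2*(N+V)/((N+V)^2 - 4*q^2) := by
    rw [div_add_div _ _ h3.ne' h4.ne', div_eq_div_iff (mul_pos h3 h4).ne' hd2.ne']; ring
  rw [show 1/(N+V+2*p) + 1/(N+V-2*p) + 1/(N+V+2*q) + 1/(N+V-2*q)
      = (1/(N+V+2*p) + 1/(N+V-2*p)) + (1/(N+V+2*q) + 1/(N+V-2*q)) by ring, e1, e2,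
    div_add_div _ _ (ne_of_gt hd1) (ne_of_gt hd2), div_le_div_iff₀ (by linarith) (mul_pos hd1 hd2)]
  nlinarith [sq_nonneg (p^2 - q^2), mul_nonneg hV (sub_nonneg.2 hVN.le), sq_nonneg (p*q),
    mul_pos hd1 hd2, sq_nonneg (N*V - 2*p^2)]

lemma pointwise4 (a b v₁ v₂ : ℝ) (hN : 1 ≤ a^2+b^2) (hv : v₁^2 + v₂^2 ≤ 1/2) :
    4 / (a^2+b^2) ≤ f2 (a+v₁, b+v₂) + f2 (a-v₁, b-v₂) + f2 (a-v₂, b+v₁) + f2 (a+v₂, b-v₁) := by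
  have := core4 (a^2+b^2) (v₁^2+v₂^2) (a*v₁+b*v₂) (b*v₁-a*v₂) hN (by positivity) hv (by ring)
  simp only [f2]
  calc 4/(a^2+b^2) ≤ _ := this
    _ = _ := by ring_nf

lemma sqrt_tri (u v s t : ℝ) :
    Real.sqrt ((u+s)^2+(v+t)^2) ≤ Real.sqrt (u^2+v^2) + Real.sqrt (s^2+t^2) := by
  have hA : (0:ℝ) ≤ u^2+v^2 := by positivity
  have hB : (0:ℝ) ≤ s^2+t^2 := by positivity
  have hY : 0 ≤ Real.sqrt (u^2+v^2) + Real.sqrt (s^2+t^2) := by positivity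
  have key : u*s + v*t ≤ Real.sqrt (u^2+v^2) * Real.sqrt (s^2+t^2) := by
    rw [← Real.sqrt_mul hA]
    rcases le_or_gt (u*s+v*t) 0 with h | h
    · exact h.trans (Real.sqrt_nonneg _)
    · rw [show u*s+v*t = Real.sqrt ((u*s+v*t)^2) by rw [Real.sqrt_sq h.le]]
      apply Real.sqrt_le_sqrt; nlinarith [sq_nonneg (u*t - v*s)]
  calc Real.sqrt ((u+s)^2+(v+t)^2)
      ≤ Real.sqrt ((Real.sqrt (u^2+v^2) + Real.sqrt (s^2+t^2))^2) := by
        apply Real.sqrt_le_sqrt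
        have h1 : Real.sqrt (u^2+v^2) ^ 2 = u^2+v^2 := Real.sq_sqrt hA
        have h2 : Real.sqrt (s^2+t^2) ^ 2 = s^2+t^2 := Real.sq_sqrt hB
        nlinarith
    _ = _ := Real.sqrt_sq hY

lemma den_ne (a b x y : ℝ) (hN : 1 ≤ a^2+b^2) (hx : x^2 + y^2 ≤ 1/2)
    (h0 : (a+x)^2+(b+y)^2 = 0) : False := by
  have h1 : (a+x)^2 = 0 := by nlinarith [sq_nonneg (a+x), sq_nonneg (b+y)]
  have h2 : (b+y)^2 = 0 := by nlinarith [sq_nonneg (a+x), sq_nonneg (b+y)]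
  have h1' : a = -x := by have := sq_eq_zero_iff.mp h1; linarith
  have h2' : b = -y := by have := sq_eq_zero_iff.mp h2; linarith
  have : a^2+b^2 = x^2+y^2 := by rw [h1', h2']; ring
  linarith

lemma integrableOn_sq (u w : ℝ × ℝ → ℝ) (hu : Continuous u) (hw : Continuous w)
    (h : ∀ v ∈ (Icc (-(1/2):ℝ) (1/2) ×ˢ Icc (-(1/2):ℝ) (1/2)), (u v)^2 + (w v)^2 ≠ 0) :
    IntegrableOn (fun v => 1 / ((u v)^2 + (w v)^2)) Sq volume := by
  have hK : IsCompact ((Icc (-(1/2):ℝ) (1/2) ×ˢ Icc (-(1/2):ℝ) (1/2)) : Set (ℝ × ℝ)) :=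
    isCompact_Icc.prod isCompact_Icc
  have hc : ContinuousOn (fun v => 1 / ((u v)^2 + (w v)^2))
      (Icc (-(1/2):ℝ) (1/2) ×ˢ Icc (-(1/2):ℝ) (1/2)) :=
    ContinuousOn.div continuousOn_const ((hu.pow 2).add (hw.pow 2)).continuousOn h
  exact (hc.integrableOn_compact hK).mono_set
    (Set.prod_mono Ioo_subset_Icc_self Ioo_subset_Icc_self)

lemma square_int (a b : ℝ) (hN : 1 ≤ a^2+b^2) :
    1/(a^2+b^2) ≤ ∫ x in Ioo (a-1/2) (a+1/2) ×ˢ Ioo (b-1/2) (b+1/2), f2 x := by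
  have hIcc : ∀ v : ℝ × ℝ, v ∈ (Icc (-(1/2):ℝ) (1/2) ×ˢ Icc (-(1/2):ℝ) (1/2)) →
      v.1^2 + v.2^2 ≤ 1/2 := by
    rintro ⟨x, y⟩ ⟨⟨hx1, hx2⟩, hy1, hy2⟩
    simp only at *
    nlinarith
  set g1 : ℝ × ℝ → ℝ := fun v => 1/((a+v.1)^2+(b+v.2)^2) with hg1
  set g2 : ℝ × ℝ → ℝ := fun v => 1/((a-v.1)^2+(b-v.2)^2) with hg2
  set g3 : ℝ × ℝ → ℝ := fun v => 1/((a-v.2)^2+(b+v.1)^2) with hg3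
  set g4 : ℝ × ℝ → ℝ := fun v => 1/((a+v.2)^2+(b-v.1)^2) with hg4
  have hi1 : IntegrableOn g1 Sq volume := by
    apply integrableOn_sq (fun v => a+v.1) (fun v => b+v.2) (by fun_prop) (by fun_prop)
    exact fun v hv h0 => den_ne a b v.1 v.2 hN (hIcc v hv) h0
  have hi2 : IntegrableOn g2 Sq volume := by
    apply integrableOn_sq (fun v => a-v.1) (fun v => b-v.2) (by fun_prop) (by fun_prop)
    exact fun v hv h0 => den_ne a b (-v.1) (-v.2) hN
      (by simp only [neg_sq]; exact hIcc v hv) (by linear_combination h0)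
  have hi3 : IntegrableOn g3 Sq volume := by
    apply integrableOn_sq (fun v => a-v.2) (fun v => b+v.1) (by fun_prop) (by fun_prop)
    exact fun v hv h0 => den_ne a b (-v.2) v.1 hN
      (by simp only [neg_sq]; linarith [hIcc v hv]) (by linear_combination h0)
  have hi4 : IntegrableOn g4 Sq volume := by
    apply integrableOn_sq (fun v => a+v.2) (fun v => b-v.1) (by fun_prop) (by fun_prop)
    exact fun v hv h0 => den_ne a b v.2 (-v.1) hN
      (by simp only [neg_sq]; linarith [hIcc v hv]) (by linear_combination h0)
  have t2 : ∫ v in Sq, g2 v = ∫ v in Sq, g1 v := by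
    calc ∫ v in Sq, g2 v = ∫ v in Sq, g1 (-v) := by
          apply setIntegral_congr_fun measSq
          intro v _
          simp only [hg1, hg2, Prod.fst_neg, Prod.snd_neg, sub_eq_add_neg]
      _ = ∫ v in Sq, g1 v := int_neg g1
  have t3 : ∫ v in Sq, g3 v = ∫ v in Sq, g1 v := by
    calc ∫ v in Sq, g3 v = ∫ v in Sq, g1 (-v.2, v.1) := by
          apply setIntegral_congr_fun measSq
          intro v _
          simp only [hg1, hg3, sub_eq_add_neg]
      _ = ∫ v in Sq, g1 v := int_rot g1
  have t4 : ∫ v in Sq, g4 v = ∫ v in Sq, g1 v := by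
    calc ∫ v in Sq, g4 v = ∫ v in Sq, (fun w => g1 (-w)) (-v.2, v.1) := by
          apply setIntegral_congr_fun measSq
          intro v _
          simp only [hg1, hg4, Prod.fst_neg, Prod.snd_neg, sub_eq_add_neg, neg_neg]
      _ = ∫ v in Sq, g1 (-v) := int_rot (fun w => g1 (-w))
      _ = ∫ v in Sq, g1 v := int_neg g1
  have e12 : IntegrableOn (fun v => g1 v + g2 v) Sq volume := hi1.add hi2
  have e123 : IntegrableOn (fun v => g1 v + g2 v + g3 v) Sq volume := e12.add hi3
  have hsum_int : IntegrableOn (fun v => g1 v + g2 v + g3 v + g4 v) Sq volume := e123.add hi4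
  have hconst : IntegrableOn (fun _ : ℝ × ℝ => 4/(a^2+b^2)) Sq volume := by
    exact integrableOn_const (by rw [volSq]; exact ENNReal.one_ne_top) enorm_ne_top
  have hmono := setIntegral_mono_on hconst hsum_int measSq (fun v hv => by
    have hv' : v.1^2 + v.2^2 ≤ 1/2 :=
      hIcc v (Set.prod_mono Ioo_subset_Icc_self Ioo_subset_Icc_self hv)
    have := pointwise4 a b v.1 v.2 hN hv'
    simpa [f2, hg1, hg2, hg3, hg4] using this)
  rw [setIntegral_const, measureReal_def, volSq] at hmono
  simp only [ENNReal.toReal_one, one_smul] at hmono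
  have hadd : ∫ v in Sq, (g1 v + g2 v + g3 v + g4 v) =
      (∫ v in Sq, g1 v) + (∫ v in Sq, g2 v) + (∫ v in Sq, g3 v) + (∫ v in Sq, g4 v) := by
    rw [integral_add e123 hi4, integral_add e12 hi3, integral_add hi1 hi2]
  rw [hadd, t2, t3, t4] at hmono
  have htr := int_trans (a, b) f2 (Ioo (a-1/2) (a+1/2) ×ˢ Ioo (b-1/2) (b+1/2))
  have hpre : (fun v => (a, b) + v) ⁻¹' (Ioo (a-1/2) (a+1/2) ×ˢ Ioo (b-1/2) (b+1/2)) = Sq := by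
    ext ⟨x, y⟩
    simp only [Sq, mem_preimage, Prod.mk_add_mk, mem_prod, mem_Ioo]
    constructor <;> rintro ⟨⟨h1,h2⟩,h3,h4⟩ <;>
      exact ⟨⟨by linarith, by linarith⟩, by linarith, by linarith⟩
  rw [hpre] at htr
  have hg1eq : ∫ v in Sq, f2 ((a, b) + v) = ∫ v in Sq, g1 v := by
    apply setIntegral_congr_fun measSq
    intro v _
    simp [f2, hg1, Prod.fst_add, Prod.snd_add]
  rw [← htr, hg1eq]
  have h4 : 4/(a^2+b^2) = 4*(1/(a^2+b^2)) := by ring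
  linarith
lemma annulus_int (a b : ℝ) (ha : 0 < a) (hab : a ≤ b) :
    ∫ x : ℝ × ℝ, ({x : ℝ × ℝ | a ≤ Real.sqrt (x.1^2+x.2^2) ∧
        Real.sqrt (x.1^2+x.2^2) ≤ b}).indicator f2 x
      = 2 * π * (Real.log b - Real.log a) := by
  set A : Set (ℝ × ℝ) := {x : ℝ × ℝ | a ≤ Real.sqrt (x.1^2+x.2^2) ∧ Real.sqrt (x.1^2+x.2^2) ≤ b}
    with hA
  set h : ℝ → ℝ := (Icc a b).indicator (fun t => t⁻¹) with hh
  rw [← integral_comp_polarCoord_symm (A.indicator f2), polarCoord_target]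
  have hcong : ∫ p in (Ioi (0:ℝ) ×ˢ Ioo (-π) π), p.1 • (A.indicator f2 (polarCoord.symm p))
      = ∫ p in (Ioi (0:ℝ) ×ˢ Ioo (-π) π), h p.1 := by
    apply setIntegral_congr_fun (measurableSet_Ioi.prod measurableSet_Ioo)
    rintro ⟨ρ, θ⟩ ⟨hρ, hθ⟩
    dsimp only
    have hρ' : (0:ℝ) < ρ := hρ
    have hsymm : polarCoord.symm (ρ, θ) = (ρ * cos θ, ρ * sin θ) := rfl
    have hsq : (ρ * cos θ)^2 + (ρ * sin θ)^2 = ρ^2 := by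
      have := sin_sq_add_cos_sq θ; nlinarith
    have hsqrt : Real.sqrt ((ρ * cos θ)^2 + (ρ * sin θ)^2) = ρ := by
      rw [hsq, Real.sqrt_sq hρ'.le]
    by_cases hmem : a ≤ ρ ∧ ρ ≤ b
    · have hA1 : polarCoord.symm (ρ, θ) ∈ A := by
        rw [hsymm, hA]; exact ⟨by rw [hsqrt]; exact hmem.1, by rw [hsqrt]; exact hmem.2⟩
      have hh1 : ρ ∈ Icc a b := hmem
      rw [indicator_of_mem hA1, hh, indicator_of_mem hh1]
      simp only [smul_eq_mul, hsymm, f2, hsq]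
      field_simp
    · have hA1 : polarCoord.symm (ρ, θ) ∉ A := by
        rw [hsymm, hA]
        intro hc
        exact hmem ⟨by rw [← hsqrt]; exact hc.1, by rw [← hsqrt]; exact hc.2⟩
      have hh1 : ρ ∉ Icc a b := hmem
      rw [indicator_of_notMem hA1, hh, indicator_of_notMem hh1, smul_zero]
  rw [hcong]
  have hπ : (ENNReal.ofReal (π + π)).toReal = 2*π := by
    rw [ENNReal.toReal_ofReal (by linarith [pi_pos])]; ring
  have hprod : ∫ p in (Ioi (0:ℝ) ×ˢ Ioo (-π) π), h p.1
      = (∫ x in Ioi (0:ℝ), h x) * (2*π) := by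
    rw [Measure.volume_eq_prod]
    have H := setIntegral_prod_mul (μ := (volume : Measure ℝ)) (ν := (volume : Measure ℝ))
      h (fun _ => (1:ℝ)) (Ioi (0:ℝ)) (Ioo (-π) π)
    have hπ' : max (π + π) 0 = 2*π := by rw [max_eq_left (by linarith [pi_pos])]; ring
    simpa [sub_neg_eq_add, hπ, hπ'] using H
  rw [hprod]
  have h1 : ∫ x in Ioi (0:ℝ), h x = Real.log b - Real.log a := by
    rw [hh, setIntegral_indicator measurableSet_Icc]
    have e : Ioi (0:ℝ) ∩ Icc a b = Icc a b :=
      inter_eq_self_of_subset_right (fun x hx => lt_of_lt_of_le ha hx.1)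
    rw [e, integral_Icc_eq_integral_Ioc, ← intervalIntegral.integral_of_le hab,
      integral_inv (Set.notMem_uIcc_of_lt ha (lt_of_lt_of_le ha hab)),
      Real.log_div (by linarith) (by linarith)]
  rw [h1]; ring
end AnnulusAux

set_option maxHeartbeats 2000000 in
/-- lattice sum of `1/|n|²` over an annulus `r₁ ≤ |n| ≤ r₂`. -/
theorem stmt1 (r₁ r₂ : ℝ) (h1 : 1 / Real.sqrt 2 < r₁) (h12 : r₁ < r₂) :
    (∑' n : ℤ × ℤ,
        if r₁ ≤ Real.sqrt ((n.1 : ℝ) ^ 2 + (n.2 : ℝ) ^ 2) ∧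
            Real.sqrt ((n.1 : ℝ) ^ 2 + (n.2 : ℝ) ^ 2) ≤ r₂ then
          1 / ((n.1 : ℝ) ^ 2 + (n.2 : ℝ) ^ 2)
        else 0) ≤
      2 * π * (Real.log (r₂ + 1 / Real.sqrt 2) - Real.log (r₁ - 1 / Real.sqrt 2)) := by
  have hsqrt2 : (1:ℝ) < Real.sqrt 2 := by
    rw [show (1:ℝ) = Real.sqrt 1 by simp]
    exact Real.sqrt_lt_sqrt (by norm_num) (by norm_num)
  set c : ℝ := 1 / Real.sqrt 2 with hcdef
  have hc : (0:ℝ) < c := by rw [hcdef]; positivity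
  have hc1 : c < 1 := by rw [hcdef, div_lt_one (by linarith)]; exact hsqrt2
  have hcs : c = Real.sqrt (1/2) := by
    rw [hcdef, one_div, one_div, ← Real.sqrt_inv]
  have hca : 0 < r₁ - c := by linarith
  have hab : r₁ - c ≤ r₂ + c := by linarith
  set A : Set (ℝ × ℝ) := {x : ℝ × ℝ | r₁ - c ≤ Real.sqrt (x.1^2+x.2^2) ∧
      Real.sqrt (x.1^2+x.2^2) ≤ r₂ + c} with hAdef
  set Q : ℤ × ℤ → Set (ℝ × ℝ) := fun n =>
    Ioo ((n.1:ℝ)-1/2) ((n.1:ℝ)+1/2) ×ˢ Ioo ((n.2:ℝ)-1/2) ((n.2:ℝ)+1/2) with hQdef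
  have measQ : ∀ n : ℤ × ℤ, MeasurableSet (Q n) :=
    fun n => measurableSet_Ioo.prod measurableSet_Ioo
  -- A is compact, f2 integrable on it
  have hAeq : A = (fun x : ℝ × ℝ => Real.sqrt (x.1^2+x.2^2)) ⁻¹' (Icc (r₁-c) (r₂+c)) := rfl
  have hνcont : Continuous (fun x : ℝ × ℝ => Real.sqrt (x.1^2+x.2^2)) :=
    ((continuous_fst.pow 2).add (continuous_snd.pow 2)).sqrt
  have hAclosed : IsClosed A := by rw [hAeq]; exact isClosed_Icc.preimage hνcont
  have hAmeas : MeasurableSet A := hAclosed.measurableSet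
  have hAsub : A ⊆ Icc (-(r₂+c)) (r₂+c) ×ˢ Icc (-(r₂+c)) (r₂+c) := by
    rintro ⟨x, y⟩ ⟨hl, hr⟩
    simp only at hl hr
    have hS : (0:ℝ) ≤ x^2+y^2 := by positivity
    have hsq : x^2+y^2 ≤ (r₂+c)^2 := by
      have := Real.sq_sqrt hS
      nlinarith [Real.sqrt_nonneg (x^2+y^2)]
    constructor <;> constructor <;> [skip; skip; skip; skip] <;> simp only <;> nlinarith
  have hAcomp : IsCompact A :=
    (isCompact_Icc.prod isCompact_Icc).of_isClosed_subset hAclosed hAsub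
  have hAne : ∀ x ∈ A, x.1^2 + x.2^2 ≠ 0 := by
    rintro ⟨x, y⟩ ⟨hl, _⟩ h0
    simp only at hl h0
    rw [h0, Real.sqrt_zero] at hl
    linarith
  have hf2cont : ContinuousOn f2 A :=
    ContinuousOn.div continuousOn_const
      ((continuous_fst.pow 2).add (continuous_snd.pow 2)).continuousOn hAne
  have hIntOn : IntegrableOn f2 A volume := hf2cont.integrableOn_compact hAcomp
  have hint : Integrable (A.indicator f2) volume := (integrable_indicator_iff hAmeas).mpr hIntOn
  have hgnn : ∀ x, 0 ≤ A.indicator f2 x :=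
    fun x => indicator_nonneg (fun y _ => by simp only [f2]; positivity) x
  -- finite support
  set M : ℕ := ⌈r₂⌉₊ with hMdef
  have hM : r₂ ≤ (M:ℝ) := Nat.le_ceil r₂
  set T : Finset (ℤ × ℤ) := Finset.Icc (-(M:ℤ)) M ×ˢ Finset.Icc (-(M:ℤ)) M with hTdef
  have habs : ∀ z : ℤ, z ∉ Finset.Icc (-(M:ℤ)) M → r₂ < |(z:ℝ)| := by
    intro z hz
    rw [Finset.mem_Icc, not_and_or, not_le, not_le] at hz
    rcases hz with h | h
    · have h' : ((M:ℤ):ℝ) < ((-z : ℤ):ℝ) := by exact_mod_cast (by linarith : (M:ℤ) < -z)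
      push_cast at h'
      calc r₂ ≤ (M:ℝ) := hM
        _ < -(z:ℝ) := h'
        _ ≤ |(z:ℝ)| := neg_le_abs _
    · have h' : ((M:ℤ):ℝ) < ((z : ℤ):ℝ) := by exact_mod_cast h
      push_cast at h'
      calc r₂ ≤ (M:ℝ) := hM
        _ < (z:ℝ) := h'
        _ ≤ |(z:ℝ)| := le_abs_self _
  have hsqrt_ge : ∀ n : ℤ × ℤ, |(n.1:ℝ)| ≤ Real.sqrt ((n.1:ℝ)^2+(n.2:ℝ)^2) ∧
      |(n.2:ℝ)| ≤ Real.sqrt ((n.1:ℝ)^2+(n.2:ℝ)^2) := by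
    intro n
    constructor
    · rw [← Real.sqrt_sq_eq_abs]
      exact Real.sqrt_le_sqrt (by nlinarith [sq_nonneg ((n.2:ℝ))])
    · rw [← Real.sqrt_sq_eq_abs]
      exact Real.sqrt_le_sqrt (by nlinarith [sq_nonneg ((n.1:ℝ))])
  have hvanish : ∀ n : ℤ × ℤ, n ∉ T →
      (if r₁ ≤ Real.sqrt ((n.1 : ℝ) ^ 2 + (n.2 : ℝ) ^ 2) ∧
          Real.sqrt ((n.1 : ℝ) ^ 2 + (n.2 : ℝ) ^ 2) ≤ r₂ then
        1 / ((n.1 : ℝ) ^ 2 + (n.2 : ℝ) ^ 2) else 0) = 0 := by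
    intro n hn
    rw [if_neg]
    rintro ⟨-, h2'⟩
    rw [hTdef, Finset.mem_product, not_and_or] at hn
    rcases hn with h | h
    · exact absurd h2' (not_le.mpr (lt_of_lt_of_le (habs _ h) (hsqrt_ge n).1))
    · exact absurd h2' (not_le.mpr (lt_of_lt_of_le (habs _ h) (hsqrt_ge n).2))
  rw [tsum_eq_sum hvanish]
  -- pointwise bound
  have hpoint : ∀ n ∈ T,
      (if r₁ ≤ Real.sqrt ((n.1 : ℝ) ^ 2 + (n.2 : ℝ) ^ 2) ∧
          Real.sqrt ((n.1 : ℝ) ^ 2 + (n.2 : ℝ) ^ 2) ≤ r₂ then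
        1 / ((n.1 : ℝ) ^ 2 + (n.2 : ℝ) ^ 2) else 0) ≤ ∫ x in Q n, A.indicator f2 x := by
    intro n _
    by_cases hcase : r₁ ≤ Real.sqrt ((n.1 : ℝ) ^ 2 + (n.2 : ℝ) ^ 2) ∧
        Real.sqrt ((n.1 : ℝ) ^ 2 + (n.2 : ℝ) ^ 2) ≤ r₂
    · rw [if_pos hcase]
      obtain ⟨hn1, hn2⟩ := hcase
      have hN1 : 1 ≤ (n.1:ℝ)^2 + (n.2:ℝ)^2 := by
        by_contra hlt
        push_neg at hlt
        have hz : (n.1:ℤ)^2 + (n.2:ℤ)^2 ≤ 0 := by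
          by_contra hpos
          push_neg at hpos
          have h1' : (1:ℤ) ≤ (n.1:ℤ)^2 + (n.2:ℤ)^2 := hpos
          have : (1:ℝ) ≤ (n.1:ℝ)^2+(n.2:ℝ)^2 := by exact_mod_cast h1'
          linarith
        have hz2 : (n.1:ℝ)^2 + (n.2:ℝ)^2 ≤ 0 := by exact_mod_cast hz
        have h0 : (n.1:ℝ)^2 + (n.2:ℝ)^2 = 0 := by
          nlinarith [sq_nonneg ((n.1:ℝ)), sq_nonneg ((n.2:ℝ))]
        rw [h0, Real.sqrt_zero] at hn1
        linarith
      have hQA : ∀ x ∈ Q n, x ∈ A := by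
        rintro ⟨x, y⟩ ⟨hx, hy⟩
        simp only [mem_Ioo] at hx hy
        have hvle : Real.sqrt ((x - (n.1:ℝ))^2 + (y - (n.2:ℝ))^2) ≤ c := by
          rw [hcs]
          exact Real.sqrt_le_sqrt (by nlinarith)
        constructor
        · have htri := sqrt_tri x y ((n.1:ℝ) - x) ((n.2:ℝ) - y)
          rw [show x + ((n.1:ℝ) - x) = (n.1:ℝ) by ring,
            show y + ((n.2:ℝ) - y) = (n.2:ℝ) by ring] at htri
          have h2 : Real.sqrt (((n.1:ℝ)-x)^2 + ((n.2:ℝ)-y)^2) ≤ c := by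
            rw [show ((n.1:ℝ)-x)^2 = (x - (n.1:ℝ))^2 by ring,
              show ((n.2:ℝ)-y)^2 = (y - (n.2:ℝ))^2 by ring]
            exact hvle
          simp only
          linarith
        · have htri := sqrt_tri (n.1:ℝ) (n.2:ℝ) (x - (n.1:ℝ)) (y - (n.2:ℝ))
          rw [show (n.1:ℝ) + (x - (n.1:ℝ)) = x by ring,
            show (n.2:ℝ) + (y - (n.2:ℝ)) = y by ring] at htri
          simp only
          linarith
      calc (1:ℝ)/((n.1:ℝ)^2+(n.2:ℝ)^2) ≤ ∫ x in Q n, f2 x := square_int _ _ hN1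
        _ = ∫ x in Q n, A.indicator f2 x :=
          (setIntegral_congr_fun (measQ n)
            (fun x hx => (indicator_of_mem (hQA x hx) f2))).symm
    · rw [if_neg hcase]
      exact setIntegral_nonneg (measQ n) (fun x _ => hgnn x)
  -- disjointness
  have hdisj : (↑T : Set (ℤ × ℤ)).Pairwise (Function.onFun Disjoint Q) := by
    intro m _ n _ hmn
    apply Set.disjoint_left.mpr
    rintro ⟨x, y⟩ hm hn'
    obtain ⟨hm1, hm2⟩ := hm
    obtain ⟨hn1, hn2⟩ := hn'
    simp only [mem_Ioo] at hm1 hm2 hn1 hn2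
    have e1 : m.1 = n.1 := by
      have hr : |((m.1 - n.1 : ℤ) : ℝ)| < 1 := by
        rw [abs_lt]; push_cast; constructor <;> linarith
      have h2 : |(m.1 - n.1 : ℤ)| < 1 := by exact_mod_cast hr
      have h3 := abs_lt.mp h2
      omega
    have e2 : m.2 = n.2 := by
      have hr : |((m.2 - n.2 : ℤ) : ℝ)| < 1 := by
        rw [abs_lt]; push_cast; constructor <;> linarith
      have h2 : |(m.2 - n.2 : ℤ)| < 1 := by exact_mod_cast hr
      have h3 := abs_lt.mp h2
      omega
    exact hmn (Prod.ext e1 e2)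
  calc ∑ n ∈ T, (if r₁ ≤ Real.sqrt ((n.1 : ℝ) ^ 2 + (n.2 : ℝ) ^ 2) ∧
          Real.sqrt ((n.1 : ℝ) ^ 2 + (n.2 : ℝ) ^ 2) ≤ r₂ then
        1 / ((n.1 : ℝ) ^ 2 + (n.2 : ℝ) ^ 2) else 0)
      ≤ ∑ n ∈ T, ∫ x in Q n, A.indicator f2 x := Finset.sum_le_sum hpoint
    _ = ∫ x in ⋃ n ∈ T, Q n, A.indicator f2 x :=
        (integral_biUnion_finset T (fun n _ => measQ n) hdisj
          (fun n _ => hint.integrableOn)).symm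
    _ ≤ ∫ x, A.indicator f2 x :=
        setIntegral_le_integral hint (Filter.Eventually.of_forall hgnn)
    _ = 2 * π * (Real.log (r₂ + c) - Real.log (r₁ - c)) := by
        rw [hAdef]; exact annulus_int (r₁-c) (r₂+c) hca hab
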